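/- arXiv:1605.06886 — 7 statements merged into one kernel-verified Lean document; each statement's English description precedes it below -/
import Mathlib

section
/- For every real parameter θ with 0 ≤ θ ≤ 1 and every positive integer N, the expected side-length under the alternative-construction nonempty-patch distribution on dimension size N equals N/(θ+(1−θ)·N); that is, Σ_{s=1}^{N} Σ_{l=1}^{N−s+1} l · w(s)·q(l|s)/(θ+(1−θ)·N) = N/(θ+(1−θ)·N). (This is the expected side-length formula E(l^{(d)}) = N_X^{(d)}/(θ+(1−θ)N_X^{(d)}) in the proof of Proposition 1.) -/
/-- Initial-position weight: `w θ 1 = 1`, `w θ s = 1 - θ` for `s ≥ 2`. -/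
noncomputable def w (θ : ℝ) (s : ℕ) : ℝ := if s = 1 then 1 else 1 - θ

/-- Truncated geometric side-length distribution on dimension size `N` given start `s`:
`q θ N s l = θ^(l-1)·(1-θ)` for `1 ≤ l < N - s + 1` and `q θ N s l = θ^(N-s)` for
`l = N - s + 1`. -/
noncomputable def q (θ : ℝ) (N s l : ℕ) : ℝ :=
  if l = N - s + 1 then θ ^ (N - s) else θ ^ (l - 1) * (1 - θ)

lemma lemA' (θ : ℝ) (n : ℕ) :
    ∑ l ∈ Finset.Icc 1 n, (l : ℝ) * (θ ^ (l - 1) * (1 - θ))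
      = (∑ k ∈ Finset.range n, θ ^ k) - n * θ ^ n := by
  induction n with
  | zero => simp
  | succ n ih =>
      rw [Finset.sum_Icc_succ_top (by omega), ih, Finset.sum_range_succ]
      push_cast
      ring

lemma lemA (θ : ℝ) (m : ℕ) :
    ∑ l ∈ Finset.Icc 1 (m + 1),
        (l : ℝ) * (if l = m + 1 then θ ^ m else θ ^ (l - 1) * (1 - θ))
      = ∑ k ∈ Finset.range (m + 1), θ ^ k := by
  rw [Finset.sum_Icc_succ_top (by omega)]
  have h : ∑ l ∈ Finset.Icc 1 m,
      (l : ℝ) * (if l = m + 1 then θ ^ m else θ ^ (l - 1) * (1 - θ))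
      = ∑ l ∈ Finset.Icc 1 m, (l : ℝ) * (θ ^ (l - 1) * (1 - θ)) := by
    apply Finset.sum_congr rfl
    intro l hl
    rw [Finset.mem_Icc] at hl
    rw [if_neg (by omega)]
  rw [h, lemA' θ m, Finset.sum_range_succ, if_pos rfl]
  push_cast
  ring

lemma sumW (θ : ℝ) (N : ℕ) (hN : 1 ≤ N) :
    ∑ s ∈ Finset.Icc 1 N, w θ s = 1 + ((N : ℝ) - 1) * (1 - θ) := by
  induction N, hN using Nat.le_induction with
  | base => simp [w]
  | succ n hn ih =>
      rw [Finset.sum_Icc_succ_top (by omega), ih]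
      have : w θ (n + 1) = 1 - θ := by
        unfold w
        rw [if_neg (by omega)]
      rw [this]
      push_cast
      ring

lemma lemB (θ : ℝ) (N : ℕ) (hN : 1 ≤ N) :
    ∑ s ∈ Finset.Icc 1 N, w θ s * (∑ k ∈ Finset.range (N - s + 1), θ ^ k)
      = (N : ℝ) := by
  induction N, hN using Nat.le_induction with
  | base => simp [w]
  | succ n hn ih =>
      rw [Finset.sum_Icc_succ_top (by omega)]
      have htop : w θ (n + 1) * (∑ k ∈ Finset.range (n + 1 - (n + 1) + 1), θ ^ k)
          = 1 - θ := by
        have hw : w θ (n + 1) = 1 - θ := by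
          unfold w; rw [if_neg (by omega)]
        simp [hw, Nat.sub_self]
      have hshift : ∀ s ∈ Finset.Icc 1 n,
          w θ s * (∑ k ∈ Finset.range (n + 1 - s + 1), θ ^ k)
          = θ * (w θ s * (∑ k ∈ Finset.range (n - s + 1), θ ^ k)) + w θ s := by
        intro s hs
        rw [Finset.mem_Icc] at hs
        have h1 : n + 1 - s + 1 = (n - s + 1) + 1 := by omega
        rw [h1, geom_sum_succ]
        ring
      rw [Finset.sum_congr rfl hshift, Finset.sum_add_distrib, ← Finset.mul_sum,
        ih, sumW θ n hn, htop]
      push_cast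
      ring

/-- Expected side-length under the alternative-construction nonempty-patch distribution:
`Σ_{s=1}^{N} Σ_{l=1}^{N−s+1} l · w(s)·q(l|s)/(θ+(1−θ)·N) = N/(θ+(1−θ)·N)`. -/
theorem spp_expected_side_length (θ : ℝ) (hθ0 : 0 ≤ θ) (hθ1 : θ ≤ 1)
    (N : ℕ) (hN : 0 < N) :
    ∑ s ∈ Finset.Icc 1 N, ∑ l ∈ Finset.Icc 1 (N - s + 1),
        (l : ℝ) * (w θ s * q θ N s l / (θ + (1 - θ) * N))
      = (N : ℝ) / (θ + (1 - θ) * N) := by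
  have key : ∑ s ∈ Finset.Icc 1 N, ∑ l ∈ Finset.Icc 1 (N - s + 1),
      (l : ℝ) * (w θ s * q θ N s l) = (N : ℝ) := by
    have hcongr : ∀ s ∈ Finset.Icc 1 N,
        ∑ l ∈ Finset.Icc 1 (N - s + 1), (l : ℝ) * (w θ s * q θ N s l)
        = w θ s * ∑ k ∈ Finset.range (N - s + 1), θ ^ k := by
      intro s hs
      rw [← lemA θ (N - s), Finset.mul_sum]
      apply Finset.sum_congr rfl
      intro l hl
      unfold q
      ring
    rw [Finset.sum_congr rfl hcongr]
    exact lemB θ N hN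
  calc ∑ s ∈ Finset.Icc 1 N, ∑ l ∈ Finset.Icc 1 (N - s + 1),
        (l : ℝ) * (w θ s * q θ N s l / (θ + (1 - θ) * N))
      = (∑ s ∈ Finset.Icc 1 N, ∑ l ∈ Finset.Icc 1 (N - s + 1),
        (l : ℝ) * (w θ s * q θ N s l)) / (θ + (1 - θ) * N) := by
        simp only [← mul_div_assoc, Finset.sum_div]
    _ = (N : ℝ) / (θ + (1 - θ) * N) := by rw [key]
end

section
/- (Proposition 1: expected total volume of patches.) Let θ ∈ [0,1] be real, τ > 0 real, D a positive integer, and N_1,…,N_D positive integers. Under the product over d = 1,…,D of alternative-construction nonempty-patch distributions on dimension sizes N_d (the D side-lengths l_1,…,l_D being independent), the expected volume of a single patch satisfies E[∏_{d=1}^D l_d] = ∏_{d=1}^D N_d/(θ+(1−θ)·N_d); consequently, with expected number of nonempty patches E(K_τ) = τ·∏_{d=1}^D (θ+(1−θ)·N_d), one has E(K_τ)·E[∏_{d=1}^D l_d] = τ·∏_{d=1}^D N_d. -/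
/-- The alternative-construction nonempty-patch distribution on dimension size `N`:
mass `w(s)·q(l|s)/(θ+(1−θ)·N)` on pairs `(s,l)` with `1 ≤ s ≤ N`, `1 ≤ l ≤ N − s + 1`. -/
noncomputable def altP (θ : ℝ) (N : ℕ) (p : ℕ × ℕ) : ℝ :=
  if 1 ≤ p.1 ∧ p.1 ≤ N ∧ 1 ≤ p.2 ∧ p.2 ≤ N - p.1 + 1 then
    w θ p.1 * q θ N p.1 p.2 / (θ + (1 - θ) * N)
  else 0


-- helper A
lemma auxA (θ : ℝ) : ∀ n : ℕ,
    (∑ l ∈ Finset.Icc 1 n, θ ^ (l - 1) * (1 - θ) * (l : ℝ)) + θ ^ n * ((n : ℝ) + 1)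
      = ∑ k ∈ Finset.range (n + 1), θ ^ k := by
  intro n
  induction n with
  | zero => simp
  | succ n ih =>
    rw [Finset.sum_Icc_succ_top (by omega : 1 ≤ n + 1)]
    rw [Finset.sum_range_succ (f := fun k => θ ^ k) (n := n + 1)]
    rw [← ih]
    push_cast
    ring

lemma sum_q (θ : ℝ) (n : ℕ) :
    ∑ l ∈ Finset.Icc 1 (n + 1), (if l = n + 1 then θ ^ n else θ ^ (l - 1) * (1 - θ)) * (l : ℝ)
      = ∑ k ∈ Finset.range (n + 1), θ ^ k := by
  rw [Finset.sum_Icc_succ_top (by omega : 1 ≤ n + 1)]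
  rw [if_pos rfl]
  rw [Finset.sum_congr rfl (fun l hl => by
    rw [if_neg (by simp at hl; omega)])]
  rw [← auxA θ n]
  push_cast
  ring

lemma auxK (θ : ℝ) : ∀ n : ℕ,
    ∑ i ∈ Finset.range n, (1 - θ) * (∑ k ∈ Finset.range (i + 1), θ ^ k)
      = (n : ℝ) - θ * ∑ k ∈ Finset.range n, θ ^ k := by
  intro n
  induction n with
  | zero => simp
  | succ n ih =>
    rw [Finset.sum_range_succ, ih]
    have h := geom_sum_succ (x := θ) (n := n)
    push_cast
    linarith [h]

lemma outer_sum (θ : ℝ) (N : ℕ) (hN : 0 < N) :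
    ∑ s ∈ Finset.Icc 1 N, w θ s * ∑ k ∈ Finset.range (N - s + 1), θ ^ k = (N : ℝ) := by
  obtain ⟨n, rfl⟩ : ∃ n, N = n + 1 := ⟨N - 1, by omega⟩
  have hIcc : Finset.Icc 1 (n+1) = Finset.Ico 1 (n+2) := by
    ext x; simp; omega
  rw [hIcc, Finset.sum_Ico_eq_sum_range]
  have h1 : n + 2 - 1 = n + 1 := by omega
  rw [h1]
  rw [Finset.sum_range_succ']
  have h2 : ∀ i ∈ Finset.range n,
      w θ (1 + (i + 1)) * ∑ k ∈ Finset.range (n + 1 - (1 + (i + 1)) + 1), θ ^ k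
        = (1 - θ) * ∑ k ∈ Finset.range ((n - 1 - i) + 1), θ ^ k := by
    intro i hi
    simp at hi
    have h4 : n + 1 - (1 + (i + 1)) + 1 = n - 1 - i + 1 := by omega
    rw [h4]
    simp only [w, if_neg (by omega : ¬ (1 + (i + 1)) = 1)]
  rw [Finset.sum_congr rfl h2]
  rw [Finset.sum_range_reflect (fun i => (1 - θ) * ∑ k ∈ Finset.range (i + 1), θ ^ k) n]
  rw [auxK θ n]
  have h3 : w θ (1 + 0) * ∑ k ∈ Finset.range (n + 1 - (1 + 0) + 1), θ ^ k
      = ∑ k ∈ Finset.range (n + 1), θ ^ k := by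
    simp [w]
  rw [h3]
  have h := geom_sum_succ (x := θ) (n := n)
  push_cast
  linarith [h]

theorem one_dim (θ : ℝ) (N : ℕ) (hN : 0 < N) :
    ∑ p ∈ Finset.Icc 1 N ×ˢ Finset.Icc 1 N, altP θ N p * (p.2 : ℝ)
      = (N : ℝ) / (θ + (1 - θ) * N) := by
  rw [Finset.sum_product]
  have key : ∀ s ∈ Finset.Icc 1 N,
      ∑ l ∈ Finset.Icc 1 N, altP θ N (s, l) * (l : ℝ)
        = w θ s * (∑ k ∈ Finset.range (N - s + 1), θ ^ k) / (θ + (1 - θ) * N) := by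
    intro s hs
    simp only [Finset.mem_Icc] at hs
    rw [← Finset.sum_subset
      (Finset.Icc_subset_Icc_right (by omega) : Finset.Icc 1 (N - s + 1) ⊆ Finset.Icc 1 N)
      (by
        intro l hl1 hl2
        simp only [Finset.mem_Icc] at hl1 hl2
        rw [altP, if_neg (by push_neg; intro _ _ _; omega), zero_mul])]
    have trans : ∀ l ∈ Finset.Icc 1 (N - s + 1), altP θ N (s, l) * (l : ℝ)
        = (w θ s / (θ + (1 - θ) * N)) *
            ((if l = (N - s) + 1 then θ ^ (N - s) else θ ^ (l - 1) * (1 - θ)) * (l : ℝ)) := by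
      intro l hl
      simp only [Finset.mem_Icc] at hl
      rw [altP, if_pos (by exact ⟨hs.1, hs.2, hl.1, hl.2⟩), q]
      ring
    rw [Finset.sum_congr rfl trans, ← Finset.mul_sum, sum_q θ (N - s)]
    ring
  rw [Finset.sum_congr rfl key, ← Finset.sum_div, outer_sum θ N hN]

/-- Proposition 1: under the product over `d = 1,…,D` of alternative-construction
nonempty-patch distributions on sizes `N_d`, the expected volume of a single patch is
`E[∏_d l_d] = ∏_d N_d/(θ+(1−θ)·N_d)`; consequently, with
`E(K_τ) = τ·∏_d (θ+(1−θ)·N_d)`, one has `E(K_τ)·E[∏_d l_d] = τ·∏_d N_d`. -/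
theorem spp_expected_total_volume (θ τ : ℝ) (hθ0 : 0 ≤ θ) (hθ1 : θ ≤ 1) (hτ : 0 < τ)
    (D : ℕ) (hD : 0 < D) (N : Fin D → ℕ) (hN : ∀ d, 0 < N d) :
    (∑ f ∈ Fintype.piFinset (fun d => Finset.Icc 1 (N d) ×ˢ Finset.Icc 1 (N d)),
        (∏ d, altP θ (N d) (f d)) * ∏ d, ((f d).2 : ℝ))
      = ∏ d, (N d : ℝ) / (θ + (1 - θ) * N d) ∧
    (τ * ∏ d, (θ + (1 - θ) * N d)) *
      (∑ f ∈ Fintype.piFinset (fun d => Finset.Icc 1 (N d) ×ˢ Finset.Icc 1 (N d)),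
        (∏ d, altP θ (N d) (f d)) * ∏ d, ((f d).2 : ℝ))
      = τ * ∏ d, (N d : ℝ) := by
  have hZ : ∀ d, (θ + (1 - θ) * (N d : ℝ)) ≠ 0 := by
    intro d
    have h1 : (1 : ℝ) ≤ (N d : ℝ) := by exact_mod_cast hN d
    nlinarith
  have h1 : (∑ f ∈ Fintype.piFinset (fun d => Finset.Icc 1 (N d) ×ˢ Finset.Icc 1 (N d)),
        (∏ d, altP θ (N d) (f d)) * ∏ d, ((f d).2 : ℝ))
      = ∏ d, (N d : ℝ) / (θ + (1 - θ) * N d) := by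
    have step1 : ∀ f : (d : Fin D) → ℕ × ℕ,
        (∏ d, altP θ (N d) (f d)) * ∏ d, ((f d).2 : ℝ)
          = ∏ d, (altP θ (N d) (f d) * ((f d).2 : ℝ)) := by
      intro f; rw [Finset.prod_mul_distrib]
    rw [Finset.sum_congr rfl (fun f _ => step1 f),
      ← Finset.prod_univ_sum (fun d => Finset.Icc 1 (N d) ×ˢ Finset.Icc 1 (N d))
        (fun d p => altP θ (N d) p * (p.2 : ℝ))]
    exact Finset.prod_congr rfl (fun d _ => one_dim θ (N d) (hN d))
  refine ⟨h1, ?_⟩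
  rw [h1, mul_assoc, ← Finset.prod_mul_distrib]
  congr 1
  exact Finset.prod_congr rfl (fun d _ => mul_div_cancel₀ _ (hZ d))
end

section
/- (Proposition 2, terminal-boundary case, one dimension.) Let θ ∈ [0,1] be real and N a positive integer. Let Y = {1,…,N+1} and X = {2,…,N+1}. Under the original-construction candidate-patch distribution on dimension size N+1, the probability that the patch interval {s,…,s+l−1} intersects X — equivalently, that l ≥ 1 and s+l−1 ≥ 2 — equals (θ+(1−θ)·N)/(N+1). Consequently (N+1)·P_Y(restriction to X nonempty) = N·P_X(side-length positive) = θ+(1−θ)·N, where P_X denotes the original-construction candidate-patch distribution on dimension size N. -/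
/-- Initial-position factor `c`: `c θ 1 = 1`, `c θ s = 1 - θ` for `s ≥ 2`. -/
noncomputable def c (θ : ℝ) (s : ℕ) : ℝ := if s = 1 then 1 else 1 - θ

/-- Conditional law of the side-length `l` given the start `s` in the original construction. -/
noncomputable def condL (θ : ℝ) (N s l : ℕ) : ℝ :=
  if l = 0 then (if s = 1 then 0 else θ) else c θ s * q θ N s l

/-- The original-construction candidate-patch distribution on dimension size `N`. -/
noncomputable def origP (θ : ℝ) (N : ℕ) (p : ℕ × ℕ) : ℝ :=
  if 1 ≤ p.1 ∧ p.1 ≤ N ∧ p.2 ≤ N - p.1 + 1 then (1 / (N : ℝ)) * condL θ N p.1 p.2 else 0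

lemma geo (θ : ℝ) : ∀ m : ℕ, ∑ l ∈ Finset.Icc 1 m, θ^(l-1)*(1-θ) = 1 - θ^m
  | 0 => by simp
  | (m+1) => by
      rw [Finset.sum_Icc_succ_top (by omega : 1 ≤ m+1), geo θ m]
      simp only [Nat.add_sub_cancel]
      ring

lemma qsum (θ : ℝ) (k : ℕ) :
    ∑ l ∈ Finset.Icc 1 (k+1), (if l = k+1 then θ^k else θ^(l-1)*(1-θ)) = 1 := by
  rw [Finset.sum_Icc_succ_top (by omega : 1 ≤ k+1), if_pos rfl,
    Finset.sum_congr rfl (fun l hl => if_neg (by simp at hl; omega)), geo θ k]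
  ring

lemma sum_Icc_split (f : ℕ → ℝ) (a b : ℕ) (h : a ≤ b) :
    ∑ x ∈ Finset.Icc a b, f x = f a + ∑ x ∈ Finset.Icc (a+1) b, f x := by
  rw [Finset.Icc_add_one_left_eq_Ioc, ← Finset.Icc_erase_left]
  exact (Finset.add_sum_erase _ f (Finset.mem_Icc.mpr ⟨le_rfl, h⟩)).symm

lemma condL_sum (θ : ℝ) (M s : ℕ) :
    ∑ l ∈ Finset.Icc 1 (M - s + 1), condL θ M s l = c θ s := by
  have h : ∀ l ∈ Finset.Icc 1 (M - s + 1),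
      condL θ M s l = c θ s * (if l = (M-s)+1 then θ^(M-s) else θ^(l-1)*(1-θ)) := by
    intro l hl
    simp only [Finset.mem_Icc] at hl
    have hl0 : l ≠ 0 := by omega
    simp [condL, q, hl0]
  rw [Finset.sum_congr rfl h, ← Finset.mul_sum, qsum, mul_one]

lemma origP_eq (θ : ℝ) (M s l : ℕ) (h1 : 1 ≤ s) (h2 : s ≤ M) (h3 : l ≤ M - s + 1) :
    origP θ M (s, l) = (1 / (M : ℝ)) * condL θ M s l := by
  simp [origP, h1, h2, h3]

lemma tail (θ : ℝ) (N : ℕ) (hN : 0 < N) :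
    ∑ l ∈ Finset.Icc 2 (N+1), condL θ (N+1) 1 l = θ := by
  have h := condL_sum θ (N+1) 1
  have e : (N+1) - 1 + 1 = N+1 := by omega
  rw [e, sum_Icc_split _ 1 (N+1) (by omega)] at h
  have h1 : condL θ (N+1) 1 1 = 1 - θ := by
    rw [condL, if_neg one_ne_zero, c, if_pos rfl, q, if_neg (by omega)]
    norm_num
  rw [h1] at h
  simp [c] at h
  linarith

/-- Proposition 2, terminal-boundary case, one dimension: with `Y = {1,…,N+1}` and
`X = {2,…,N+1}`, under the original-construction candidate-patch distribution on size
`N+1`, the probability that the patch interval `{s,…,s+l−1}` intersects `X`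
(i.e. `l ≥ 1` and `s+l−1 ≥ 2`) equals `(θ+(1−θ)·N)/(N+1)`.  Consequently
`(N+1)·P_Y(restriction to X nonempty) = N·P_X(side-length positive) = θ+(1−θ)·N`. -/
theorem spp_restriction_terminal_boundary (θ : ℝ) (hθ0 : 0 ≤ θ) (hθ1 : θ ≤ 1)
    (N : ℕ) (hN : 0 < N) :
    (∑ s ∈ Finset.Icc 1 (N + 1), ∑ l ∈ Finset.Icc 0 (N + 1 - s + 1),
        if 1 ≤ l ∧ 2 ≤ s + l - 1 then origP θ (N + 1) (s, l) else 0)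
      = (θ + (1 - θ) * N) / ((N : ℝ) + 1) ∧
    ((N : ℝ) + 1) *
      (∑ s ∈ Finset.Icc 1 (N + 1), ∑ l ∈ Finset.Icc 0 (N + 1 - s + 1),
        if 1 ≤ l ∧ 2 ≤ s + l - 1 then origP θ (N + 1) (s, l) else 0)
      = (N : ℝ) *
        (∑ s ∈ Finset.Icc 1 N, ∑ l ∈ Finset.Icc 1 (N - s + 1), origP θ N (s, l)) ∧
    (N : ℝ) * (∑ s ∈ Finset.Icc 1 N, ∑ l ∈ Finset.Icc 1 (N - s + 1), origP θ N (s, l))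
      = θ + (1 - θ) * N := by
  have hNR : (N : ℝ) ≠ 0 := Nat.cast_ne_zero.mpr hN.ne'
  have hN1R : (N : ℝ) + 1 ≠ 0 := by positivity
  -- First component
  have hA : (∑ s ∈ Finset.Icc 1 (N + 1), ∑ l ∈ Finset.Icc 0 (N + 1 - s + 1),
        if 1 ≤ l ∧ 2 ≤ s + l - 1 then origP θ (N + 1) (s, l) else 0)
      = (θ + (1 - θ) * N) / ((N : ℝ) + 1) := by
    rw [sum_Icc_split _ 1 (N+1) (by omega)]
    have hs1 : (∑ l ∈ Finset.Icc 0 (N + 1 - 1 + 1),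
        if 1 ≤ l ∧ 2 ≤ 1 + l - 1 then origP θ (N + 1) (1, l) else 0)
        = (1/((N:ℝ)+1)) * θ := by
      have e : N + 1 - 1 + 1 = N + 1 := by omega
      rw [e, sum_Icc_split _ 0 (N+1) (by omega)]
      simp only [zero_add]
      rw [sum_Icc_split _ 1 (N+1) (by omega)]
      have z0 : (if 1 ≤ 0 ∧ 2 ≤ 1 + 0 - 1 then origP θ (N+1) (1,0) else 0) = 0 := by
        norm_num
      have z1 : (if 1 ≤ 1 ∧ 2 ≤ 1 + 1 - 1 then origP θ (N+1) (1,1) else 0) = 0 := by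
        norm_num
      have hcongr : ∀ l ∈ Finset.Icc (1+1) (N+1),
          (if 1 ≤ l ∧ 2 ≤ 1 + l - 1 then origP θ (N+1) (1,l) else 0)
          = (1/((N:ℝ)+1)) * condL θ (N+1) 1 l := by
        intro l hl
        simp only [Finset.mem_Icc] at hl
        rw [if_pos ⟨by omega, by omega⟩, origP_eq θ (N+1) 1 l le_rfl (by omega) (by omega)]
        push_cast
        ring
      rw [z0, z1, zero_add, Finset.sum_congr rfl hcongr, ← Finset.mul_sum,
        show (1+1 = 2) from rfl, tail θ N hN]
      rw [zero_add]
    have hs2 : ∀ s ∈ Finset.Icc (1+1) (N+1),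
        (∑ l ∈ Finset.Icc 0 (N + 1 - s + 1),
          if 1 ≤ l ∧ 2 ≤ s + l - 1 then origP θ (N + 1) (s, l) else 0)
        = (1/((N:ℝ)+1)) * (1-θ) := by
      intro s hs
      simp only [Finset.mem_Icc] at hs
      rw [sum_Icc_split _ 0 (N+1-s+1) (by omega)]
      simp only [zero_add]
      have z0 : (if 1 ≤ 0 ∧ 2 ≤ s + 0 - 1 then origP θ (N+1) (s,0) else 0) = 0 := by
        norm_num
      have hcongr : ∀ l ∈ Finset.Icc 1 (N+1-s+1),
          (if 1 ≤ l ∧ 2 ≤ s + l - 1 then origP θ (N+1) (s,l) else 0)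
          = (1/((N:ℝ)+1)) * condL θ (N+1) s l := by
        intro l hl
        simp only [Finset.mem_Icc] at hl
        rw [if_pos ⟨hl.1, by omega⟩, origP_eq θ (N+1) s l (by omega) hs.2 hl.2]
        push_cast
        ring
      rw [z0, zero_add, Finset.sum_congr rfl hcongr, ← Finset.mul_sum, condL_sum,
        c, if_neg (by omega)]
    rw [hs1, Finset.sum_congr rfl hs2, Finset.sum_const, nsmul_eq_mul, Nat.card_Icc,
      show (N + 1 + 1 - (1+1) = N) from by omega]
    field_simp
  -- Third component
  have hB : (N : ℝ) * (∑ s ∈ Finset.Icc 1 N, ∑ l ∈ Finset.Icc 1 (N - s + 1), origP θ N (s, l))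
      = θ + (1 - θ) * N := by
    have hinner : ∀ s ∈ Finset.Icc 1 N,
        (∑ l ∈ Finset.Icc 1 (N - s + 1), origP θ N (s, l))
        = (1/(N:ℝ)) * c θ s := by
      intro s hs
      simp only [Finset.mem_Icc] at hs
      have hcongr : ∀ l ∈ Finset.Icc 1 (N-s+1),
          origP θ N (s,l) = (1/(N:ℝ)) * condL θ N s l := by
        intro l hl
        simp only [Finset.mem_Icc] at hl
        exact origP_eq θ N s l hs.1 hs.2 hl.2
      rw [Finset.sum_congr rfl hcongr, ← Finset.mul_sum, condL_sum]
    rw [Finset.sum_congr rfl hinner, sum_Icc_split _ 1 N hN]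
    have hc2 : ∀ s ∈ Finset.Icc (1+1) N, (1/(N:ℝ)) * c θ s = (1/(N:ℝ)) * (1-θ) := by
      intro s hs
      simp only [Finset.mem_Icc] at hs
      rw [c, if_neg (by omega)]
    rw [Finset.sum_congr rfl hc2, Finset.sum_const, nsmul_eq_mul, Nat.card_Icc,
      show c θ 1 = 1 from by simp [c]]
    have : ((N + 1 - (1+1) : ℕ) : ℝ) = (N:ℝ) - 1 := by
      have : N + 1 - (1+1) = N - 1 := by omega
      rw [this, Nat.cast_sub hN]
      norm_num
    rw [this]
    field_simp
    ring
  refine ⟨hA, ?_, hB⟩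
  rw [hA, hB]
  field_simp
end

section
/- (Proposition 2, initial-boundary case, one dimension.) Let θ ∈ [0,1] be real and N a positive integer. Let Y = {1,…,N+1} and X = {1,…,N}. Under the original-construction candidate-patch distribution on dimension size N+1, the probability that the patch interval {s,…,s+l−1} intersects X — equivalently, that l ≥ 1 and s ≤ N — equals (θ+(1−θ)·N)/(N+1). Consequently (N+1)·P_Y(restriction to X nonempty) = N·P_X(side-length positive) = θ+(1−θ)·N, where P_X denotes the original-construction candidate-patch distribution on dimension size N. -/
lemma geom_tail (θ : ℝ) (K : ℕ) :
    ∑ l ∈ Finset.Icc 1 K, θ ^ (l - 1) * (1 - θ) = 1 - θ ^ K := by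
  induction K with
  | zero => simp
  | succ K ih =>
    rw [Finset.sum_Icc_succ_top (by omega : 1 ≤ K + 1), ih]
    simp only [Nat.add_sub_cancel]
    ring

lemma sum_q_s5 (θ : ℝ) (M s : ℕ) (h : s ≤ M) :
    ∑ l ∈ Finset.Icc 1 (M - s + 1), q θ M s l = 1 := by
  rw [Finset.sum_Icc_succ_top (by omega : 1 ≤ M - s + 1)]
  have h1 : ∀ l ∈ Finset.Icc 1 (M - s), q θ M s l = θ ^ (l - 1) * (1 - θ) := by
    intro l hl
    simp only [Finset.mem_Icc] at hl
    unfold q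
    rw [if_neg (by omega)]
  rw [Finset.sum_congr rfl h1, geom_tail]
  unfold q
  rw [if_pos rfl]
  ring

lemma sum_condL (θ : ℝ) (M s : ℕ) (h2 : s ≤ M) :
    ∑ l ∈ Finset.Icc 1 (M - s + 1), condL θ M s l = c θ s := by
  have h : ∀ l ∈ Finset.Icc 1 (M - s + 1), condL θ M s l = c θ s * q θ M s l := by
    intro l hl
    simp only [Finset.mem_Icc] at hl
    unfold condL
    rw [if_neg (by omega)]
  rw [Finset.sum_congr rfl h, ← Finset.mul_sum, sum_q_s5 θ M s h2, mul_one]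

lemma sum_c (θ : ℝ) (M : ℕ) (h : 1 ≤ M) :
    ∑ s ∈ Finset.Icc 1 M, c θ s = θ + (1 - θ) * M := by
  induction M, h using Nat.le_induction with
  | base => simp [c]
  | succ M hM ih =>
    rw [Finset.sum_Icc_succ_top (by omega : 1 ≤ M + 1), ih]
    unfold c
    rw [if_neg (by omega)]
    push_cast
    ring

/-- Proposition 2, initial-boundary case, one dimension: with `Y = {1,…,N+1}` and
`X = {1,…,N}`, under the original-construction candidate-patch distribution on size
`N+1`, the probability that the patch interval `{s,…,s+l−1}` intersects `X`
(i.e. `l ≥ 1` and `s ≤ N`) equals `(θ+(1−θ)·N)/(N+1)`.  Consequently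
`(N+1)·P_Y(restriction to X nonempty) = N·P_X(side-length positive) = θ+(1−θ)·N`. -/
theorem spp_restriction_initial_boundary (θ : ℝ) (hθ0 : 0 ≤ θ) (hθ1 : θ ≤ 1)
    (N : ℕ) (hN : 0 < N) :
    (∑ s ∈ Finset.Icc 1 (N + 1), ∑ l ∈ Finset.Icc 0 (N + 1 - s + 1),
        if 1 ≤ l ∧ s ≤ N then origP θ (N + 1) (s, l) else 0)
      = (θ + (1 - θ) * N) / ((N : ℝ) + 1) ∧
    ((N : ℝ) + 1) *
      (∑ s ∈ Finset.Icc 1 (N + 1), ∑ l ∈ Finset.Icc 0 (N + 1 - s + 1),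
        if 1 ≤ l ∧ s ≤ N then origP θ (N + 1) (s, l) else 0)
      = (N : ℝ) *
        (∑ s ∈ Finset.Icc 1 N, ∑ l ∈ Finset.Icc 1 (N - s + 1), origP θ N (s, l)) ∧
    (N : ℝ) * (∑ s ∈ Finset.Icc 1 N, ∑ l ∈ Finset.Icc 1 (N - s + 1), origP θ N (s, l))
      = θ + (1 - θ) * N := by
  have hNR : (N : ℝ) ≠ 0 := Nat.cast_ne_zero.mpr hN.ne'
  have hN1R : (N : ℝ) + 1 ≠ 0 := by positivity
  -- X-side sum
  have hX : (∑ s ∈ Finset.Icc 1 N, ∑ l ∈ Finset.Icc 1 (N - s + 1), origP θ N (s, l))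
      = (1 / (N : ℝ)) * (θ + (1 - θ) * N) := by
    have hs : ∀ s ∈ Finset.Icc 1 N,
        (∑ l ∈ Finset.Icc 1 (N - s + 1), origP θ N (s, l)) = (1 / (N : ℝ)) * c θ s := by
      intro s hs
      simp only [Finset.mem_Icc] at hs
      have hl : ∀ l ∈ Finset.Icc 1 (N - s + 1),
          origP θ N (s, l) = (1 / (N : ℝ)) * condL θ N s l := by
        intro l hl
        simp only [Finset.mem_Icc] at hl
        unfold origP
        rw [if_pos ⟨hs.1, hs.2, hl.2⟩]
      rw [Finset.sum_congr rfl hl, ← Finset.mul_sum, sum_condL θ N s hs.2]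
    rw [Finset.sum_congr rfl hs, ← Finset.mul_sum, sum_c θ N hN]
  -- Y-side sum
  have hY : (∑ s ∈ Finset.Icc 1 (N + 1), ∑ l ∈ Finset.Icc 0 (N + 1 - s + 1),
        if 1 ≤ l ∧ s ≤ N then origP θ (N + 1) (s, l) else 0)
      = (1 / ((N : ℝ) + 1)) * (θ + (1 - θ) * N) := by
    have hs : ∀ s ∈ Finset.Icc 1 (N + 1),
        (∑ l ∈ Finset.Icc 0 (N + 1 - s + 1),
          if 1 ≤ l ∧ s ≤ N then origP θ (N + 1) (s, l) else 0)
        = if s ≤ N then (1 / ((N : ℝ) + 1)) * c θ s else 0 := by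
      intro s hs
      simp only [Finset.mem_Icc] at hs
      by_cases hsN : s ≤ N
      · rw [if_pos hsN]
        have hsplit : Finset.Icc 0 (N + 1 - s + 1) = insert 0 (Finset.Icc 1 (N + 1 - s + 1)) := by
          ext x
          simp only [Finset.mem_insert, Finset.mem_Icc]
          omega
        rw [hsplit, Finset.sum_insert (by simp)]
        rw [if_neg (by omega)]
        have hl : ∀ l ∈ Finset.Icc 1 (N + 1 - s + 1),
            (if 1 ≤ l ∧ s ≤ N then origP θ (N + 1) (s, l) else 0)
            = (1 / ((N : ℝ) + 1)) * condL θ (N + 1) s l := by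
          intro l hl
          simp only [Finset.mem_Icc] at hl
          rw [if_pos ⟨hl.1, hsN⟩]
          unfold origP
          rw [if_pos ⟨hs.1, by omega, by omega⟩]
          push_cast
          ring_nf
        rw [zero_add, Finset.sum_congr rfl hl, ← Finset.mul_sum, sum_condL θ (N + 1) s (by omega)]

      · rw [if_neg hsN]
        apply Finset.sum_eq_zero
        intro l _
        rw [if_neg (by tauto)]
    rw [Finset.sum_congr rfl hs, Finset.sum_Icc_succ_top (by omega : 1 ≤ N + 1)]
    rw [if_neg (by omega)]
    have : ∀ s ∈ Finset.Icc 1 N,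
        (if s ≤ N then (1 / ((N : ℝ) + 1)) * c θ s else 0) = (1 / ((N : ℝ) + 1)) * c θ s := by
      intro s hs
      simp only [Finset.mem_Icc] at hs
      rw [if_pos hs.2]
    rw [add_zero, Finset.sum_congr rfl this, ← Finset.mul_sum, sum_c θ N hN]
  refine ⟨?_, ?_, ?_⟩
  · rw [hY]; ring
  · rw [hY, hX]; field_simp
  · rw [hX]; field_simp
end

section
/- (Proposition 2, multi-dimensional rate equality.) Let θ ∈ [0,1] be real, D a positive integer, N_1,…,N_D positive integers, and fix a dimension d' ∈ {1,…,D}. Let Y be the D-dimensional array with dimension sizes M_d, where M_d = N_d for d ≠ d' and M_{d'} = N_{d'}+1, and let X be embedded in Y agreeing in all dimensions d ≠ d' and, in dimension d', consisting either of the first N_{d'} positions (initial boundary shared) or of the last N_{d'} positions (terminal boundary shared). Under the product over d of original-construction candidate-patch distributions on sizes M_d, let P_Y(restriction nonempty) be the probability that in every dimension d the patch interval {s_d,…,s_d+l_d−1} intersects the corresponding index set of X. Then (∏_{d=1}^D M_d)·P_Y(restriction nonempty) = (∏_{d=1}^D N_d)·∏_{d=1}^D (θ+(1−θ)·N_d)/N_d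 = ∏_{d=1}^D (θ+(1−θ)·N_d), where the middle expression is ∏_d N_d times the probability that a candidate patch on X is nonempty. -/
lemma qsum_aux (θ : ℝ) (k : ℕ) :
    θ ^ k + ∑ l ∈ Finset.Icc 1 k, θ ^ (l - 1) * (1 - θ) = 1 := by
  induction k with
  | zero => simp
  | succ k ih =>
    rw [Finset.sum_Icc_succ_top (by omega)]
    have h : θ ^ (k + 1 - 1) * (1 - θ) = θ ^ k - θ ^ (k + 1) := by
      rw [show k + 1 - 1 = k from rfl, pow_succ]; ring
    rw [h]; linarith

lemma qsum_s6 (θ : ℝ) (N s : ℕ) (h1 : 1 ≤ s) (h2 : s ≤ N) :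
    ∑ l ∈ Finset.Icc 1 (N - s + 1), q θ N s l = 1 := by
  rw [Finset.sum_Icc_succ_top (by omega)]
  have hlast : q θ N s (N - s + 1) = θ ^ (N - s) := by rw [q, if_pos rfl]
  have hrest : ∀ l ∈ Finset.Icc 1 (N - s), q θ N s l = θ ^ (l - 1) * (1 - θ) := by
    intro l hl
    rw [Finset.mem_Icc] at hl
    rw [q, if_neg (by omega)]
  rw [hlast, Finset.sum_congr rfl hrest]
  have := qsum_aux θ (N - s); linarith

lemma innerSumLem (θ : ℝ) (N s : ℕ) (h1 : 1 ≤ s) (h2 : s ≤ N) :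
    (∑ l ∈ Finset.Icc 0 N, if 1 ≤ l then origP θ N (s, l) else 0)
      = (1 / (N : ℝ)) * c θ s := by
  have hsub : Finset.Icc 1 (N - s + 1) ⊆ Finset.Icc 0 N := by
    intro l hl; rw [Finset.mem_Icc] at *; omega
  have key : ∀ l ∈ Finset.Icc 0 N,
      (if 1 ≤ l then origP θ N (s, l) else 0)
        = if l ∈ Finset.Icc 1 (N - s + 1) then (1 / (N : ℝ)) * (c θ s * q θ N s l) else 0 := by
    intro l hl
    rw [Finset.mem_Icc] at hl
    by_cases h0 : 1 ≤ l
    · rw [if_pos h0]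
      by_cases hle : l ≤ N - s + 1
      · rw [if_pos (Finset.mem_Icc.mpr ⟨h0, hle⟩), origP,
          if_pos ⟨h1, h2, hle⟩, condL, if_neg (by omega)]
      · rw [if_neg (by rw [Finset.mem_Icc]; omega), origP,
          if_neg (by simp only [not_and]; intro _ _; omega)]
    · rw [if_neg h0, if_neg (by rw [Finset.mem_Icc]; omega)]
  rw [Finset.sum_congr rfl key, Finset.sum_ite_mem, Finset.inter_eq_right.mpr hsub,
    ← Finset.mul_sum, ← Finset.mul_sum, qsum_s6 θ N s h1 h2, mul_one]

lemma csum (θ : ℝ) (N : ℕ) (hN : 1 ≤ N) :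
    ∑ s ∈ Finset.Icc 1 N, c θ s = θ + (1 - θ) * N := by
  have key : ∀ s ∈ Finset.Icc 1 N, c θ s = (1 - θ) + (if s = 1 then θ else 0) := by
    intro s _; rw [c]; split <;> simp
  rw [Finset.sum_congr rfl key, Finset.sum_add_distrib, Finset.sum_const,
    Finset.sum_ite_eq' _ 1 (fun _ => θ), if_pos (Finset.mem_Icc.mpr ⟨le_refl 1, hN⟩),
    Nat.card_Icc]
  simp only [nsmul_eq_mul]
  push_cast
  ring

lemma dimA (θ : ℝ) (N : ℕ) (hN : 1 ≤ N) :
    (∑ p ∈ Finset.Icc 1 N ×ˢ Finset.Icc 0 N, if 1 ≤ p.2 then origP θ N p else 0)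
      = (θ + (1 - θ) * N) / N := by
  rw [Finset.sum_product]
  have key : ∀ s ∈ Finset.Icc 1 N,
      (∑ l ∈ Finset.Icc 0 N, if 1 ≤ l then origP θ N (s, l) else 0)
        = (1 / (N : ℝ)) * c θ s := by
    intro s hs; rw [Finset.mem_Icc] at hs; exact innerSumLem θ N s hs.1 hs.2
  rw [Finset.sum_congr rfl key, ← Finset.mul_sum, csum θ N hN, one_div, inv_mul_eq_div]

lemma dimInit (θ : ℝ) (N : ℕ) (hN : 1 ≤ N) :
    (∑ p ∈ Finset.Icc 1 (N + 1) ×ˢ Finset.Icc 0 (N + 1),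
        if 1 ≤ p.2 ∧ p.1 ≤ N then origP θ (N + 1) p else 0)
      = (θ + (1 - θ) * N) / (N + 1) := by
  rw [Finset.sum_product]
  have key : ∀ s ∈ Finset.Icc 1 (N + 1),
      (∑ l ∈ Finset.Icc 0 (N + 1), if 1 ≤ l ∧ s ≤ N then origP θ (N + 1) (s, l) else 0)
        = if s ∈ Finset.Icc 0 N then (1 / ((N : ℝ) + 1)) * c θ s else 0 := by
    intro s hs; rw [Finset.mem_Icc] at hs
    by_cases h : s ≤ N
    · rw [if_pos (Finset.mem_Icc.mpr ⟨Nat.zero_le s, h⟩)]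
      have : ∀ l ∈ Finset.Icc 0 (N + 1),
          (if 1 ≤ l ∧ s ≤ N then origP θ (N + 1) (s, l) else 0)
            = if 1 ≤ l then origP θ (N + 1) (s, l) else 0 := by
        intro l _; simp [h]
      rw [Finset.sum_congr rfl this, innerSumLem θ (N + 1) s hs.1 (by omega)]
      push_cast; ring_nf
    · rw [if_neg (by rw [Finset.mem_Icc]; omega)]
      apply Finset.sum_eq_zero
      intro l _
      rw [if_neg (by tauto)]
  rw [Finset.sum_congr rfl key, Finset.sum_ite_mem, show Finset.Icc 1 (N + 1) ∩ Finset.Icc 0 N = Finset.Icc 1 N by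
      ext x; simp only [Finset.mem_inter, Finset.mem_Icc]; omega,
    ← Finset.mul_sum, csum θ N hN, one_div, inv_mul_eq_div]

lemma dimTerm (θ : ℝ) (N : ℕ) (hN : 1 ≤ N) :
    (∑ p ∈ Finset.Icc 1 (N + 1) ×ˢ Finset.Icc 0 (N + 1),
        if 1 ≤ p.2 ∧ 2 ≤ p.1 + p.2 - 1 then origP θ (N + 1) p else 0)
      = (θ + (1 - θ) * N) / (N + 1) := by
  have h11 : origP θ (N + 1) (1, 1) = (1 - θ) / ((N : ℝ) + 1) := by
    rw [origP, if_pos ⟨le_refl 1, show 1 ≤ N + 1 by omega, show 1 ≤ N + 1 - 1 + 1 by omega⟩, condL,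
      if_neg (by omega), c, if_pos rfl, q, if_neg (by omega)]
    push_cast; ring
  have key : ∀ p ∈ Finset.Icc 1 (N + 1) ×ˢ Finset.Icc 0 (N + 1),
      (if 1 ≤ p.2 ∧ 2 ≤ p.1 + p.2 - 1 then origP θ (N + 1) p else 0)
        = (if 1 ≤ p.2 then origP θ (N + 1) p else 0)
          - (if p = (1, 1) then (1 - θ) / ((N : ℝ) + 1) else 0) := by
    intro p hp
    rw [Finset.mem_product, Finset.mem_Icc, Finset.mem_Icc] at hp
    by_cases hp11 : p = (1, 1)
    · subst hp11
      rw [if_neg (by omega), if_pos (le_refl 1), if_pos rfl, h11, sub_self]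
    · rw [if_neg hp11, sub_zero]
      by_cases h0 : 1 ≤ p.2
      · have hne : p.1 ≠ 1 ∨ p.2 ≠ 1 := by
          by_contra hc; push_neg at hc
          exact hp11 (Prod.ext hc.1 hc.2)
        rw [if_pos ⟨h0, by omega⟩, if_pos h0]
      · rw [if_neg (by tauto), if_neg h0]
  rw [Finset.sum_congr rfl key, Finset.sum_sub_distrib,
    Finset.sum_ite_eq' _ ((1, 1) : ℕ × ℕ) (fun _ => (1 - θ) / ((N : ℝ) + 1)),
    if_pos (by simp only [Finset.mem_product, Finset.mem_Icc]; omega),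
    dimA θ (N + 1) (by omega)]
  push_cast
  rw [div_sub_div_same]
  ring_nf

/-- Proposition 2, multi-dimensional rate equality: `Y` has sizes `M_d` (`M_d = N_d` for
`d ≠ d'`, `M_{d'} = N_{d'} + 1`), and `X ⊆ Y` agrees in all dimensions `d ≠ d'` and, in
dimension `d'`, consists of the first (`initial = true`) or last (`initial = false`)
`N_{d'}` positions.  Then
`(∏_d M_d)·P_Y(restriction nonempty) = (∏_d N_d)·∏_d (θ+(1−θ)·N_d)/N_d = ∏_d (θ+(1−θ)·N_d)`.
In dimension `d ≠ d'` the patch interval intersects `X` iff `l_d ≥ 1`; in dimension `d'`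
it intersects iff `l ≥ 1 ∧ s ≤ N_{d'}` (initial boundary shared) or
`l ≥ 1 ∧ s + l − 1 ≥ 2` (terminal boundary shared). -/
theorem spp_multidim_rate_equality (θ : ℝ) (hθ0 : 0 ≤ θ) (hθ1 : θ ≤ 1)
    (D : ℕ) (hD : 0 < D) (N : Fin D → ℕ) (hN : ∀ d, 0 < N d)
    (d' : Fin D) (initial : Bool) (M : Fin D → ℕ)
    (hM : ∀ d, M d = if d = d' then N d + 1 else N d) :
    (∏ d, (M d : ℝ)) *
      (∑ f ∈ Fintype.piFinset (fun d => Finset.Icc 1 (M d) ×ˢ Finset.Icc 0 (M d)),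
        if (∀ d, 1 ≤ (f d).2 ∧
              (d = d' → if initial then (f d).1 ≤ N d' else 2 ≤ (f d).1 + (f d).2 - 1)) then
          ∏ d, origP θ (M d) (f d)
        else 0)
      = (∏ d, (N d : ℝ)) * ∏ d, (θ + (1 - θ) * N d) / N d ∧
    (∏ d, (N d : ℝ)) * (∏ d, (θ + (1 - θ) * N d) / N d) = ∏ d, (θ + (1 - θ) * N d) := by
  have hMpos : ∀ d, ((M d : ℝ)) ≠ 0 := by
    intro d
    have : 0 < M d := by rw [hM d]; split <;> [omega; exact hN d]
    positivity
  have hNpos : ∀ d, ((N d : ℝ)) ≠ 0 := by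
    intro d
    have := hN d
    positivity
  have hfac : (∑ f ∈ Fintype.piFinset (fun d => Finset.Icc 1 (M d) ×ˢ Finset.Icc 0 (M d)),
        if (∀ d, 1 ≤ (f d).2 ∧
              (d = d' → if initial then (f d).1 ≤ N d' else 2 ≤ (f d).1 + (f d).2 - 1)) then
          ∏ d, origP θ (M d) (f d)
        else 0)
      = ∏ d, ∑ p ∈ Finset.Icc 1 (M d) ×ˢ Finset.Icc 0 (M d),
          (if 1 ≤ p.2 ∧ (d = d' → if initial then p.1 ≤ N d' else 2 ≤ p.1 + p.2 - 1) then
            origP θ (M d) p else 0) := by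
    rw [Finset.prod_univ_sum]
    apply Finset.sum_congr rfl
    intro f _
    by_cases h : ∀ d, 1 ≤ (f d).2 ∧
        (d = d' → if initial then (f d).1 ≤ N d' else 2 ≤ (f d).1 + (f d).2 - 1)
    · rw [if_pos h]
      exact Finset.prod_congr rfl (fun d _ => by rw [if_pos (h d)])
    · rw [if_neg h]
      push_neg at h
      obtain ⟨d, hd⟩ := h
      refine (Finset.prod_eq_zero (Finset.mem_univ d) ?_).symm
      rw [if_neg (by tauto)]
  have hdim : ∀ d, (∑ p ∈ Finset.Icc 1 (M d) ×ˢ Finset.Icc 0 (M d),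
        (if 1 ≤ p.2 ∧ (d = d' → if initial then p.1 ≤ N d' else 2 ≤ p.1 + p.2 - 1) then
          origP θ (M d) p else 0))
      = (θ + (1 - θ) * N d) / (M d : ℝ) := by
    intro d
    by_cases hd : d = d'
    · subst hd
      rw [hM d, if_pos rfl]
      cases initial with
      | true =>
        have hc : ∀ p ∈ Finset.Icc 1 (N d + 1) ×ˢ Finset.Icc 0 (N d + 1),
            (if 1 ≤ p.2 ∧ (d = d → if true then p.1 ≤ N d else 2 ≤ p.1 + p.2 - 1) then
              origP θ (N d + 1) p else 0)
            = if 1 ≤ p.2 ∧ p.1 ≤ N d then origP θ (N d + 1) p else 0 := by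
          intro p _
          exact if_congr (by simp) rfl rfl
        rw [Finset.sum_congr rfl hc, dimInit θ (N d) (hN d)]
        push_cast; ring
      | false =>
        have hc : ∀ p ∈ Finset.Icc 1 (N d + 1) ×ˢ Finset.Icc 0 (N d + 1),
            (if 1 ≤ p.2 ∧ (d = d → if false then p.1 ≤ N d else 2 ≤ p.1 + p.2 - 1) then
              origP θ (N d + 1) p else 0)
            = if 1 ≤ p.2 ∧ 2 ≤ p.1 + p.2 - 1 then origP θ (N d + 1) p else 0 := by
          intro p _
          exact if_congr (by simp) rfl rfl
        rw [Finset.sum_congr rfl hc, dimTerm θ (N d) (hN d)]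
        push_cast; ring
    · rw [hM d, if_neg hd]
      have hc : ∀ p ∈ Finset.Icc 1 (N d) ×ˢ Finset.Icc 0 (N d),
          (if 1 ≤ p.2 ∧ (d = d' → if initial then p.1 ≤ N d' else 2 ≤ p.1 + p.2 - 1) then
            origP θ (N d) p else 0)
          = if 1 ≤ p.2 then origP θ (N d) p else 0 := by
        intro p _
        exact if_congr (by tauto) rfl rfl
      rw [Finset.sum_congr rfl hc, dimA θ (N d) (hN d)]
  constructor
  · rw [hfac, Finset.prod_congr rfl (fun d _ => hdim d), ← Finset.prod_mul_distrib,
      ← Finset.prod_mul_distrib]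
    apply Finset.prod_congr rfl
    intro d _
    rw [mul_div_cancel₀ _ (hMpos d), mul_div_cancel₀ _ (hNpos d)]
  · rw [← Finset.prod_mul_distrib]
    apply Finset.prod_congr rfl
    intro d _
    rw [mul_div_cancel₀ _ (hNpos d)]
end

section
/- Let θ ∈ [0,1] be real and N a positive integer. Under the original-construction candidate-patch distribution on dimension size N+1, conditional on the event that the patch interval {s,…,s+l−1} intersects X = {2,…,N+1} (i.e., l ≥ 1 and s+l−1 ≥ 2), the initial position satisfies P(s = 1 | intersects X) = θ/(θ+(1−θ)·N) and P(s = n | intersects X) = (1−θ)/(θ+(1−θ)·N) for every n with 2 ≤ n ≤ N+1. -/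
lemma geo1 (θ : ℝ) : ∀ m : ℕ, ∑ l ∈ Finset.Icc 1 m, θ ^ (l - 1) * (1 - θ) = 1 - θ ^ m := by
  intro m
  induction m with
  | zero => simp
  | succ k ih =>
    rw [Finset.sum_Icc_succ_top (by omega : 1 ≤ k + 1), ih]
    simp only [Nat.add_sub_cancel]
    ring

lemma geo2 (θ : ℝ) : ∀ m : ℕ, ∑ l ∈ Finset.Icc 2 (m + 1), θ ^ (l - 1) * (1 - θ) = θ - θ ^ (m + 1) := by
  intro m
  induction m with
  | zero => simp
  | succ k ih =>
    rw [Finset.sum_Icc_succ_top (by omega : 2 ≤ k + 1 + 1), ih]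
    simp only [Nat.add_sub_cancel]
    ring

/-- Column sum: total mass on start `n` restricted to the intersection event. -/
lemma colsum (θ : ℝ) (N n : ℕ) (hN : 0 < N) (hn1 : 1 ≤ n) (hn : n ≤ N + 1) :
    ∑ l ∈ Finset.Icc 0 (N + 1),
      (if 1 ≤ l ∧ 2 ≤ n + l - 1 then origP θ (N + 1) (n, l) else 0)
    = (1 / ((N : ℝ) + 1)) * (if n = 1 then θ else 1 - θ) := by
  rcases eq_or_ne n 1 with rfl | hne
  · -- case n = 1
    obtain ⟨M, rfl⟩ : ∃ M, N = M + 1 := ⟨N - 1, by omega⟩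
    have key : ∀ l ∈ Finset.Icc 0 (M + 1 + 1),
        (if 1 ≤ l ∧ 2 ≤ 1 + l - 1 then origP θ (M + 1 + 1) (1, l) else 0)
        = if 2 ≤ l then
            (1 / ((M : ℝ) + 1 + 1)) *
              (if l = M + 2 then θ ^ (M + 1) else θ ^ (l - 1) * (1 - θ)) else 0 := by
      intro l hl
      simp only [Finset.mem_Icc] at hl
      by_cases h2 : 2 ≤ l
      · rw [if_pos (by omega), if_pos h2]
        unfold origP condL c q
        rw [if_pos (by simp only; omega)]
        simp only
        rw [if_neg (by omega)]
        simp only [show M + 1 + 1 = M + 2 from rfl, show M + 2 - 1 = M + 1 from rfl,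
          if_true, one_mul]
        push_cast
        ring_nf
      · rw [if_neg (by omega), if_neg h2]
    rw [Finset.sum_congr rfl key, ← Finset.sum_filter]
    have hf : (Finset.Icc 0 (M + 1 + 1)).filter (fun l => 2 ≤ l) = Finset.Icc 2 (M + 2) := by
      ext x; simp [Finset.mem_filter, Finset.mem_Icc]; omega
    rw [hf, Finset.sum_Icc_succ_top (by omega : 2 ≤ M + 1 + 1)]
    rw [if_pos rfl]
    have : ∑ l ∈ Finset.Icc 2 (M + 1),
        (1 / ((M : ℝ) + 1 + 1)) * (if l = M + 2 then θ ^ (M + 1) else θ ^ (l - 1) * (1 - θ))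
        = ∑ l ∈ Finset.Icc 2 (M + 1), (1 / ((M : ℝ) + 1 + 1)) * (θ ^ (l - 1) * (1 - θ)) := by
      apply Finset.sum_congr rfl
      intro l hl
      simp only [Finset.mem_Icc] at hl
      rw [if_neg (by omega)]
    rw [this, ← Finset.mul_sum, geo2 θ M]
    push_cast
    ring
  · -- case n ≥ 2
    have hn2 : 2 ≤ n := by omega
    set m := N + 1 - n with hm
    have hnm : n + m = N + 1 := by omega
    have key : ∀ l ∈ Finset.Icc 0 (N + 1),
        (if 1 ≤ l ∧ 2 ≤ n + l - 1 then origP θ (N + 1) (n, l) else 0)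
        = if 1 ≤ l ∧ l ≤ m + 1 then
            (1 / ((N : ℝ) + 1)) * ((1 - θ) *
              (if l = m + 1 then θ ^ m else θ ^ (l - 1) * (1 - θ))) else 0 := by
      intro l hl
      simp only [Finset.mem_Icc] at hl
      by_cases hc : 1 ≤ l ∧ l ≤ m + 1
      · rw [if_pos ⟨hc.1, by omega⟩, if_pos hc]
        unfold origP condL c q
        rw [if_pos (by simp only; omega)]
        simp only
        rw [if_neg (by omega), if_neg hne]
        have h1 : (N + 1) - n = m := by omega
        rw [h1]
        push_cast
        ring_nf
      · rcases not_and_or.mp hc with h | h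
        · rw [if_neg (by omega), if_neg hc]
        · -- l > m + 1 : origP is 0 since l > N+1-n+1
          rw [if_neg hc]
          by_cases h1 : 1 ≤ l ∧ 2 ≤ n + l - 1
          · rw [if_pos h1]
            unfold origP
            rw [if_neg (by simp only; omega)]
          · rw [if_neg h1]
    rw [Finset.sum_congr rfl key, ← Finset.sum_filter]
    have hf : (Finset.Icc 0 (N + 1)).filter (fun l => 1 ≤ l ∧ l ≤ m + 1)
        = Finset.Icc 1 (m + 1) := by
      ext x; simp [Finset.mem_filter, Finset.mem_Icc]; omega
    rw [hf, Finset.sum_Icc_succ_top (by omega : 1 ≤ m + 1)]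
    rw [if_pos rfl]
    have : ∑ l ∈ Finset.Icc 1 m,
        (1 / ((N : ℝ) + 1)) * ((1 - θ) * (if l = m + 1 then θ ^ m else θ ^ (l - 1) * (1 - θ)))
        = ∑ l ∈ Finset.Icc 1 m, (1 / ((N : ℝ) + 1)) * ((1 - θ) * (θ ^ (l - 1) * (1 - θ))) := by
      apply Finset.sum_congr rfl
      intro l hl
      simp only [Finset.mem_Icc] at hl
      rw [if_neg (by omega)]
    rw [this]
    have hgeo := geo1 θ m
    rw [if_neg hne]
    have h2 : ∑ l ∈ Finset.Icc 1 m, (1 / ((N:ℝ) + 1)) * ((1 - θ) * (θ ^ (l - 1) * (1 - θ)))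
        = (1 / ((N:ℝ) + 1) * (1 - θ)) * ∑ l ∈ Finset.Icc 1 m, θ ^ (l - 1) * (1 - θ) := by
      rw [Finset.mul_sum]
      exact Finset.sum_congr rfl fun l _ => by ring
    rw [h2, hgeo]
    ring

/-- The denominator: total mass of the intersection event. -/
lemma denomsum (θ : ℝ) (N : ℕ) (hN : 0 < N) :
    ∑ p ∈ Finset.Icc 1 (N + 1) ×ˢ Finset.Icc 0 (N + 1),
        (if 1 ≤ p.2 ∧ 2 ≤ p.1 + p.2 - 1 then origP θ (N + 1) p else 0)
    = (1 / ((N : ℝ) + 1)) * (θ + (1 - θ) * N) := by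
  rw [Finset.sum_product]
  have : ∀ s ∈ Finset.Icc 1 (N + 1),
      ∑ l ∈ Finset.Icc 0 (N + 1),
        (if 1 ≤ l ∧ 2 ≤ s + l - 1 then origP θ (N + 1) (s, l) else 0)
      = (1 / ((N : ℝ) + 1)) * (if s = 1 then θ else 1 - θ) := by
    intro s hs
    simp only [Finset.mem_Icc] at hs
    exact colsum θ N s hN hs.1 hs.2
  rw [Finset.sum_congr rfl this, ← Finset.mul_sum]
  congr 1
  have hins : Finset.Icc 1 (N + 1) = insert 1 (Finset.Icc 2 (N + 1)) := by
    ext x; simp [Finset.mem_Icc, Finset.mem_insert]; omega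
  rw [hins, Finset.sum_insert (by simp [Finset.mem_Icc])]
  rw [if_pos rfl]
  have : ∑ s ∈ Finset.Icc 2 (N + 1), (if s = 1 then θ else 1 - θ)
      = ∑ s ∈ Finset.Icc 2 (N + 1), (1 - θ) := by
    apply Finset.sum_congr rfl
    intro s hs
    simp only [Finset.mem_Icc] at hs
    rw [if_neg (by omega)]
  rw [this, Finset.sum_const, Nat.card_Icc]
  have : N + 1 + 1 - 2 = N := by omega
  rw [this]
  rw [nsmul_eq_mul]
  push_cast
  ring

/-- The numerator for start `n`. -/
lemma numsum (θ : ℝ) (N n : ℕ) (hN : 0 < N) (hn1 : 1 ≤ n) (hn : n ≤ N + 1) :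
    ∑ p ∈ Finset.Icc 1 (N + 1) ×ˢ Finset.Icc 0 (N + 1),
        (if p.1 = n ∧ 1 ≤ p.2 ∧ 2 ≤ p.1 + p.2 - 1 then origP θ (N + 1) p else 0)
    = (1 / ((N : ℝ) + 1)) * (if n = 1 then θ else 1 - θ) := by
  rw [Finset.sum_product]
  have step : ∀ s ∈ Finset.Icc 1 (N + 1),
      ∑ l ∈ Finset.Icc 0 (N + 1),
        (if s = n ∧ 1 ≤ l ∧ 2 ≤ s + l - 1 then origP θ (N + 1) (s, l) else 0)
      = if s = n then (1 / ((N : ℝ) + 1)) * (if n = 1 then θ else 1 - θ) else 0 := by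
    intro s hs
    simp only [Finset.mem_Icc] at hs
    by_cases hsn : s = n
    · subst hsn
      rw [if_pos rfl]
      have : ∀ l ∈ Finset.Icc 0 (N + 1),
          (if s = s ∧ 1 ≤ l ∧ 2 ≤ s + l - 1 then origP θ (N + 1) (s, l) else 0)
          = (if 1 ≤ l ∧ 2 ≤ s + l - 1 then origP θ (N + 1) (s, l) else 0) := by
        intro l _
        simp
      rw [Finset.sum_congr rfl this, colsum θ N s hN hs.1 hs.2]
    · rw [if_neg hsn]
      apply Finset.sum_eq_zero
      intro l _
      rw [if_neg (by tauto)]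
  rw [Finset.sum_congr rfl step, Finset.sum_ite_eq' (Finset.Icc 1 (N + 1)) n]
  rw [if_pos (by simp [Finset.mem_Icc]; omega)]

/-- Under the original-construction candidate-patch distribution on size `N+1`,
conditional on the patch interval `{s,…,s+l−1}` intersecting `X = {2,…,N+1}`
(i.e. `l ≥ 1` and `s+l−1 ≥ 2`), the initial position satisfies
`P(s = 1 | ·) = θ/(θ+(1−θ)·N)` and `P(s = n | ·) = (1−θ)/(θ+(1−θ)·N)` for
every `2 ≤ n ≤ N+1`. -/
theorem spp_conditional_initial_position (θ : ℝ) (hθ0 : 0 ≤ θ) (hθ1 : θ ≤ 1)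
    (N : ℕ) (hN : 0 < N) :
    ((∑ p ∈ Finset.Icc 1 (N + 1) ×ˢ Finset.Icc 0 (N + 1),
        if p.1 = 1 ∧ 1 ≤ p.2 ∧ 2 ≤ p.1 + p.2 - 1 then origP θ (N + 1) p else 0) /
     (∑ p ∈ Finset.Icc 1 (N + 1) ×ˢ Finset.Icc 0 (N + 1),
        if 1 ≤ p.2 ∧ 2 ≤ p.1 + p.2 - 1 then origP θ (N + 1) p else 0)
      = θ / (θ + (1 - θ) * N)) ∧
    (∀ n : ℕ, 2 ≤ n → n ≤ N + 1 →
      (∑ p ∈ Finset.Icc 1 (N + 1) ×ˢ Finset.Icc 0 (N + 1),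
          if p.1 = n ∧ 1 ≤ p.2 ∧ 2 ≤ p.1 + p.2 - 1 then origP θ (N + 1) p else 0) /
      (∑ p ∈ Finset.Icc 1 (N + 1) ×ˢ Finset.Icc 0 (N + 1),
          if 1 ≤ p.2 ∧ 2 ≤ p.1 + p.2 - 1 then origP θ (N + 1) p else 0)
        = (1 - θ) / (θ + (1 - θ) * N)) := by
  have hNpos : (0 : ℝ) < (N : ℝ) := by exact_mod_cast hN
  have hN1 : ((N : ℝ) + 1) ≠ 0 := by positivity
  have h1le : (1:ℝ) ≤ θ + (1 - θ) * N := by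
    have hges : (1 - θ) * 1 ≤ (1 - θ) * (N : ℝ) :=
      mul_le_mul_of_nonneg_left (Nat.one_le_cast.mpr hN) (by linarith)
    linarith
  have hD : θ + (1 - θ) * N ≠ 0 := by linarith
  have hinv : (1 / ((N : ℝ) + 1)) ≠ 0 := by positivity
  constructor
  · rw [denomsum θ N hN, numsum θ N 1 hN le_rfl (by omega), if_pos rfl,
      mul_div_mul_left _ _ hinv]
  · intro n hn2 hn
    rw [denomsum θ N hN, numsum θ N n hN (by omega) hn, if_neg (by omega),
      mul_div_mul_left _ _ hinv]
end

section
/- For every real number θ and every positive integer N: (Σ_{l=1}^{N−1} l·θ^{l−1}·(1−θ) + N·θ^{N−1}) + (1−θ)·Σ_{s=2}^{N} (Σ_{l=1}^{N−s} l·θ^{l−1}·(1−θ) + (N−s+1)·θ^{N−s}) = N. (Empty sums are zero; this is the key summation identity in the proof of Proposition 1, showing that the unnormalized expected side-length over all initial positions equals N.) -/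
open Finset

private lemma aux1 (θ : ℝ) (M : ℕ) :
    (∑ l ∈ Icc 1 M, (l : ℝ) * θ ^ (l - 1) * (1 - θ)) + (M + 1 : ℝ) * θ ^ M
      = ∑ i ∈ range (M + 1), θ ^ i := by
  induction M with
  | zero => simp
  | succ M ih =>
    rw [Finset.sum_Icc_succ_top (by omega : 1 ≤ M + 1),
      Finset.sum_range_succ]
    rw [← ih]
    push_cast [Nat.add_sub_cancel]
    ring

private lemma aux2 (θ : ℝ) (n : ℕ) :
    (1 - θ) * ∑ i ∈ range n, θ ^ i = 1 - θ ^ n := by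
  linear_combination -(geom_sum_mul θ n)

private lemma aux3 (θ : ℝ) (N : ℕ) :
    (∑ i ∈ range (N + 1), θ ^ i)
      + (1 - θ) * ∑ k ∈ Icc 1 N, (∑ i ∈ range k, θ ^ i) = (N : ℝ) + 1 := by
  induction N with
  | zero => simp
  | succ N ih =>
    rw [Finset.sum_Icc_succ_top (by omega : 1 ≤ N + 1), mul_add,
      Finset.sum_range_succ (fun i => θ ^ i) (N + 1), aux2]
    push_cast
    push_cast at ih
    linarith

/-- Key summation identity in the proof of Proposition 1: the unnormalized expected
side-length over all initial positions equals `N`: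
`(Σ_{l=1}^{N−1} l·θ^{l−1}·(1−θ) + N·θ^{N−1})
  + (1−θ)·Σ_{s=2}^{N} (Σ_{l=1}^{N−s} l·θ^{l−1}·(1−θ) + (N−s+1)·θ^{N−s}) = N`. -/
theorem spp_unnormalized_expected_side_length (θ : ℝ) (N : ℕ) (hN : 0 < N) :
    ((∑ l ∈ Finset.Icc 1 (N - 1), (l : ℝ) * θ ^ (l - 1) * (1 - θ)) + N * θ ^ (N - 1)) +
      (1 - θ) * ∑ s ∈ Finset.Icc 2 N,
        ((∑ l ∈ Finset.Icc 1 (N - s), (l : ℝ) * θ ^ (l - 1) * (1 - θ)) +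
          ((N : ℝ) - s + 1) * θ ^ (N - s))
      = (N : ℝ) := by
  have h1 : ((∑ l ∈ Finset.Icc 1 (N - 1), (l : ℝ) * θ ^ (l - 1) * (1 - θ)) + N * θ ^ (N - 1))
      = ∑ i ∈ range N, θ ^ i := by
    have := aux1 θ (N - 1)
    have hc : ((N - 1 : ℕ) : ℝ) + 1 = (N : ℝ) := by
      have : (1:ℕ) ≤ N := hN
      push_cast [Nat.cast_sub this]
      ring
    rw [hc] at this
    rw [this, Nat.sub_add_cancel hN]
  have h2 : ∀ s ∈ Finset.Icc 2 N,
      ((∑ l ∈ Finset.Icc 1 (N - s), (l : ℝ) * θ ^ (l - 1) * (1 - θ)) +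
        ((N : ℝ) - s + 1) * θ ^ (N - s)) = ∑ i ∈ range (N - s + 1), θ ^ i := by
    intro s hs
    rw [Finset.mem_Icc] at hs
    have := aux1 θ (N - s)
    have hc : ((N - s : ℕ) : ℝ) + 1 = (N : ℝ) - s + 1 := by
      rw [Nat.cast_sub hs.2]
    rw [hc] at this
    exact this
  rw [h1, Finset.sum_congr rfl h2]
  have h3 : ∑ s ∈ Finset.Icc 2 N, (∑ i ∈ range (N - s + 1), θ ^ i)
      = ∑ k ∈ Icc 1 (N - 1), (∑ i ∈ range k, θ ^ i) := by
    apply Finset.sum_nbij' (fun s => N + 1 - s) (fun k => N + 1 - k)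
    · intro s hs; rw [Finset.mem_Icc] at *; omega
    · intro k hk; rw [Finset.mem_Icc] at *; omega
    · intro s hs; rw [Finset.mem_Icc] at hs; omega
    · intro k hk; rw [Finset.mem_Icc] at hk; omega
    · intro s hs; rw [Finset.mem_Icc] at hs
      have h : N - s + 1 = N + 1 - s := by omega
      rw [h]
  rw [h3]
  have := aux3 θ (N - 1)
  have hN1 : N - 1 + 1 = N := by omega
  rw [hN1] at this
  rw [this]; push_cast [Nat.cast_sub (by omega : 1 ≤ N)]; ring
end
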